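/- Let F : [0,2] → [0,1] be a cumulative distribution function with F(0)=0, F(2)=1, satisfying (1+C)·F(x) = F(x/2) + x + 2(C−1) + x·∫_{(x+2)/2}^2 F(y)/(y−1)² dy for all x ∈ (0,2), where C = 1 − F(1). Then ∫_0^2 F(x) dx = 2(1−2C)/(1−C), provided C < 1. -/

import Mathlib

open MeasureTheory Set

private lemma cdf_swap_aux (G : ℝ → ℝ) (hmeas : Measurable G)
    (h0 : ∀ y, 0 ≤ G y) (h1 : ∀ y, G y ≤ 1) :
    MeasureTheory.IntegrableOn
      (fun x => x * ∫ y in ((x + 2)/2)..2, G y / (y - 1) ^ 2) (Set.Ioc 0 2) ∧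
    (∫ x in (0:ℝ)..2, x * ∫ y in ((x + 2)/2)..2, G y / (y - 1) ^ 2)
      = 2 * ∫ y in (1:ℝ)..2, G y := by
  set μ : Measure ℝ := volume.restrict (Ioc 0 2) with hμ
  set ν : Measure ℝ := volume.restrict (Ioc 1 2) with hν
  set g : ℝ × ℝ → ℝ :=
    fun p => if p.1 < 2 * p.2 - 2 then p.1 * (G p.2 / (p.2 - 1) ^ 2) else 0 with hg
  have hgmeas : Measurable g := by
    apply Measurable.ite
    · exact measurableSet_lt measurable_fst (by fun_prop)
    · exact measurable_fst.mul
        ((hmeas.comp measurable_snd).div ((measurable_snd.sub measurable_const).pow_const 2))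
    · exact measurable_const
  -- the inner x-integral, for fixed y ∈ Ioc 1 2
  have keyy : ∀ y ∈ Ioc (1:ℝ) 2, ∫ x, g (x, y) ∂μ = 2 * G y := by
    intro y hy
    have hy1 : (1:ℝ) < y := hy.1
    have hy2 : y ≤ 2 := hy.2
    have hfun : (fun x => g (x, y)) =
        (Iio (2 * y - 2)).indicator (fun x => x * (G y / (y - 1) ^ 2)) := by
      funext x
      rw [Set.indicator_apply]
      simp only [hg, Set.mem_Iio]
    rw [hμ, hfun, setIntegral_indicator measurableSet_Iio]
    have hset : Ioc 0 2 ∩ Iio (2 * y - 2) = Ioo 0 (2 * y - 2) := by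
      ext x
      simp only [mem_inter_iff, mem_Ioc, mem_Iio, mem_Ioo]
      constructor
      · rintro ⟨⟨a, _⟩, c⟩; exact ⟨a, c⟩
      · rintro ⟨a, c⟩; exact ⟨⟨a, by linarith⟩, c⟩
    rw [hset, ← integral_Ioc_eq_integral_Ioo,
      ← intervalIntegral.integral_of_le (by linarith : (0:ℝ) ≤ 2 * y - 2),
      intervalIntegral.integral_mul_const, integral_id]
    have hne : (y - 1) ≠ 0 := by linarith
    field_simp
    ring
  -- nonnegativity of g on the relevant region
  have hgnn : ∀ y : ℝ, 1 < y → ∀ x ∈ Ioc (0:ℝ) 2, 0 ≤ g (x, y) := by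
    intro y hy1 x hx
    simp only [hg]
    split_ifs
    · exact mul_nonneg hx.1.le (div_nonneg (h0 y) (sq_nonneg _))
    · exact le_rfl
  have hnorm : ∀ y ∈ Ioc (1:ℝ) 2, ∫ x, ‖g (x, y)‖ ∂μ = 2 * G y := by
    intro y hy
    rw [← keyy y hy]
    apply integral_congr_ae
    filter_upwards [ae_restrict_mem measurableSet_Ioc] with x hx
    rw [Real.norm_eq_abs, abs_of_nonneg (hgnn y hy.1 x hx)]
  -- integrability of g on the product
  have hxint : ∀ y : ℝ, Integrable (fun x => g (x, y)) μ := by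
    intro y
    have hμfin : μ (Set.univ) < ⊤ := by
      rw [hμ, Measure.restrict_apply_univ]
      simp [Real.volume_Ioc]
    apply Integrable.mono' (g := fun _ => 2 * |G y / (y - 1) ^ 2|)
    · rw [integrable_const_iff]; right; exact ⟨hμfin⟩
    · exact (hgmeas.comp (measurable_id.prodMk measurable_const)).aestronglyMeasurable
    · filter_upwards [ae_restrict_mem measurableSet_Ioc] with x hx
      simp only [hg, Real.norm_eq_abs]
      split_ifs
      · rw [abs_mul]
        have : |x| ≤ 2 := by rw [abs_of_nonneg hx.1.le]; exact hx.2
        nlinarith [abs_nonneg (G y / (y - 1) ^ 2), abs_nonneg x]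
      · simp [abs_nonneg]
  have hGν : Integrable (fun y => 2 * G y) ν := by
    apply Integrable.mono' (g := fun _ => (2:ℝ))
    · rw [integrable_const_iff]; right
      constructor; rw [hν, Measure.restrict_apply_univ]
      simp [Real.volume_Ioc]
    · exact (hmeas.const_mul 2).aestronglyMeasurable
    · filter_upwards with y
      rw [Real.norm_eq_abs, abs_of_nonneg (mul_nonneg (by norm_num) (h0 y))]
      linarith [h1 y]
  have hprod : Integrable g (μ.prod ν) := by
    rw [integrable_prod_iff' hgmeas.aestronglyMeasurable]
    refine ⟨Filter.Eventually.of_forall hxint, ?_⟩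
    apply hGν.congr
    filter_upwards [ae_restrict_mem measurableSet_Ioc] with y hy
    exact (hnorm y hy).symm
  -- the inner y-integral, for fixed x ∈ Ioc 0 2
  have keyx : ∀ x ∈ Ioc (0:ℝ) 2,
      (∫ y, g (x, y) ∂ν) = x * ∫ y in ((x + 2)/2)..2, G y / (y - 1) ^ 2 := by
    intro x hx
    have hx0 : (0:ℝ) < x := hx.1
    have hx2 : x ≤ 2 := hx.2
    have hfun : (fun y => g (x, y)) =
        (Ioi ((x + 2)/2)).indicator (fun y => x * (G y / (y - 1) ^ 2)) := by
      funext y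
      rw [Set.indicator_apply]
      simp only [hg, Set.mem_Ioi]
      exact if_congr ⟨fun h => by linarith, fun h => by linarith⟩ rfl rfl
    rw [hν, hfun, setIntegral_indicator measurableSet_Ioi]
    have hset : Ioc 1 2 ∩ Ioi ((x + 2)/2) = Ioc ((x + 2)/2) 2 := by
      ext y
      simp only [mem_inter_iff, mem_Ioc, mem_Ioi]
      constructor
      · rintro ⟨⟨_, b⟩, c⟩; exact ⟨c, b⟩
      · rintro ⟨a, b⟩; exact ⟨⟨by linarith, b⟩, a⟩
    rw [hset, ← intervalIntegral.integral_of_le (by linarith : (x + 2)/2 ≤ 2),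
      intervalIntegral.integral_const_mul]
  constructor
  · have h₁ : Integrable (fun x => ∫ y, g (x, y) ∂ν) μ := hprod.integral_prod_left
    apply h₁.congr
    filter_upwards [ae_restrict_mem measurableSet_Ioc] with x hx
    exact keyx x hx
  · rw [intervalIntegral.integral_of_le (by norm_num : (0:ℝ) ≤ 2),
      intervalIntegral.integral_of_le (by norm_num : (1:ℝ) ≤ 2)]
    have hswap : (∫ x, (∫ y, g (x, y) ∂ν) ∂μ) = ∫ y, (∫ x, g (x, y) ∂μ) ∂ν :=
      integral_integral_swap hprod
    calc (∫ x in Ioc (0:ℝ) 2, x * ∫ y in ((x + 2)/2)..2, G y / (y - 1) ^ 2)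
        = ∫ x, (∫ y, g (x, y) ∂ν) ∂μ := by
          rw [hμ]
          exact setIntegral_congr_fun measurableSet_Ioc fun x hx => (keyx x hx).symm
      _ = ∫ y, (∫ x, g (x, y) ∂μ) ∂ν := hswap
      _ = ∫ y in Ioc (1:ℝ) 2, 2 * G y := by
          rw [hν]
          exact setIntegral_congr_fun measurableSet_Ioc fun y hy => keyy y hy
      _ = 2 * ∫ y in Ioc (1:ℝ) 2, G y := integral_const_mul 2 G

theorem cdf_integral_value (F : ℝ → ℝ) (C : ℝ)
    (hmono : MonotoneOn F (Set.Icc 0 2))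
    (hrange : ∀ x ∈ Set.Icc (0:ℝ) 2, F x ∈ Set.Icc (0:ℝ) 1)
    (hF0 : F 0 = 0) (hF2 : F 2 = 1)
    (hC : C = 1 - F 1) (hC1 : C < 1)
    (heq : ∀ x ∈ Set.Ioo (0:ℝ) 2,
      (1 + C) * F x = F (x/2) + x + 2 * (C - 1)
        + x * ∫ y in ((x + 2)/2)..2, F y / (y - 1) ^ 2) :
    ∫ x in (0:ℝ)..2, F x = 2 * (1 - 2 * C) / (1 - C) := by
  classical
  set G : ℝ → ℝ := fun y => F (max 0 (min 2 y)) with hGdef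
  have hmemφ : ∀ y : ℝ, max 0 (min 2 y) ∈ Icc (0:ℝ) 2 :=
    fun y => ⟨le_max_left _ _, max_le (by norm_num) (min_le_left _ _)⟩
  have hGmono : Monotone G := fun a b hab =>
    hmono (hmemφ a) (hmemφ b) (max_le_max le_rfl (min_le_min le_rfl hab))
  have hGmeas : Measurable G := hGmono.measurable
  have hGeq : ∀ y ∈ Icc (0:ℝ) 2, G y = F y := by
    intro y hy
    simp only [hGdef]
    rw [min_eq_right hy.2, max_eq_right hy.1]
  have hG0 : ∀ y, 0 ≤ G y := fun y => (hrange _ (hmemφ y)).1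
  have hG1 : ∀ y, G y ≤ 1 := fun y => (hrange _ (hmemφ y)).2
  -- the functional equation for G
  have heqG : ∀ x ∈ Ioo (0:ℝ) 2,
      (1 + C) * G x = G (x/2) + x + 2 * (C - 1)
        + x * ∫ y in ((x + 2)/2)..2, G y / (y - 1) ^ 2 := by
    intro x hx
    have hx0 : (0:ℝ) < x := hx.1
    have hx2 : x < 2 := hx.2
    have hinner : (∫ y in ((x + 2)/2)..2, G y / (y - 1) ^ 2)
        = ∫ y in ((x + 2)/2)..2, F y / (y - 1) ^ 2 := by
      apply intervalIntegral.integral_congr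
      intro y hy
      rw [Set.uIcc_of_le (by linarith : (x + 2)/2 ≤ 2)] at hy
      show G y / (y - 1) ^ 2 = F y / (y - 1) ^ 2
      rw [hGeq y ⟨by linarith [hy.1], hy.2⟩]
    rw [hGeq x ⟨hx0.le, hx2.le⟩, hGeq (x/2) ⟨by linarith, by linarith⟩, hinner]
    exact heq x hx
  have hGii : ∀ a b : ℝ, IntervalIntegrable G volume a b :=
    fun a b => (hGmono.monotoneOn _).intervalIntegrable
  have hGhalf : IntervalIntegrable (fun x => G (x/2)) volume 0 2 := by
    have : Monotone (fun x => G (x/2)) := fun a b h => hGmono (by linarith)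
    exact (this.monotoneOn _).intervalIntegrable
  obtain ⟨hTint0, hTval⟩ := cdf_swap_aux G hGmeas hG0 hG1
  have hTint : IntervalIntegrable
      (fun x => x * ∫ y in ((x + 2)/2)..2, G y / (y - 1) ^ 2) volume 0 2 := by
    rw [intervalIntegrable_iff, uIoc_of_le (by norm_num : (0:ℝ) ≤ 2)]
    exact hTint0
  have h_id : IntervalIntegrable (fun x : ℝ => x) volume 0 2 := intervalIntegral.intervalIntegrable_id
  have h_const : IntervalIntegrable (fun _ : ℝ => 2 * (C - 1)) volume 0 2 :=
    intervalIntegrable_const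
  -- integrate the functional equation over (0,2)
  have h2ae : ∀ᵐ x : ℝ, x ≠ 2 := by
    rw [ae_iff]
    have : {x : ℝ | ¬x ≠ 2} = {2} := by ext x; simp
    rw [this]
    exact measure_singleton 2
  have hint : (∫ x in (0:ℝ)..2, (1 + C) * G x)
      = ∫ x in (0:ℝ)..2, (G (x/2) + x + 2 * (C - 1)
        + x * ∫ y in ((x + 2)/2)..2, G y / (y - 1) ^ 2) := by
    apply intervalIntegral.integral_congr_ae
    filter_upwards [h2ae] with x hx2 hxI
    rw [uIoc_of_le (by norm_num : (0:ℝ) ≤ 2)] at hxI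
    exact heqG x ⟨hxI.1, lt_of_le_of_ne hxI.2 hx2⟩
  rw [intervalIntegral.integral_const_mul,
    intervalIntegral.integral_add ((hGhalf.add h_id).add h_const) hTint,
    intervalIntegral.integral_add (hGhalf.add h_id) h_const,
    intervalIntegral.integral_add hGhalf h_id, hTval,
    integral_id, intervalIntegral.integral_const] at hint
  have hcomp : (∫ x in (0:ℝ)..2, G (x/2)) = 2 * ∫ x in (0:ℝ)..1, G x := by
    rw [intervalIntegral.integral_comp_div (f := G) (by norm_num : (2:ℝ) ≠ 0)]
    norm_num
  rw [hcomp] at hint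
  have hadd : (∫ x in (0:ℝ)..1, G x) + (∫ x in (1:ℝ)..2, G x) = ∫ x in (0:ℝ)..2, G x :=
    intervalIntegral.integral_add_adjacent_intervals (hGii 0 1) (hGii 1 2)
  have hFG : (∫ x in (0:ℝ)..2, F x) = ∫ x in (0:ℝ)..2, G x := by
    apply intervalIntegral.integral_congr
    intro y hy
    rw [Set.uIcc_of_le (by norm_num : (0:ℝ) ≤ 2)] at hy
    exact (hGeq y hy).symm
  rw [hFG]
  set I := ∫ x in (0:ℝ)..2, G x
  have hCne : (1:ℝ) - C ≠ 0 := by linarith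
  rw [eq_div_iff hCne]
  have hs : (2:ℝ) - 0 = 2 := by norm_num
  rw [hs, smul_eq_mul] at hint
  nlinarith [hint, hadd]
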